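/- In any 3SS scheme for domain S, for every distribution P_X supported on S, the shares satisfy I(W₁₂; W₂₃ | W₃₁) ≥ RI(X₁; X₃), where RI is residual information. -/

import Mathlib

open scoped Classical

/-- A probability distribution on a finite sample space `Ω`. -/
structure FinProb (Ω : Type) [Fintype Ω] where
  p : Ω → ℝ
  nonneg : ∀ ω, 0 ≤ p ω
  sum_one : ∑ ω, p ω = 1

variable {Ω : Type} [Fintype Ω]

/-- `P(A = a)` for a random variable `A` on `(Ω, μ)`. -/
noncomputable def prEq {α : Type} (μ : FinProb Ω) (A : Ω → α) (a : α) : ℝ :=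
  ∑ ω, if A ω = a then μ.p ω else 0

/-- Shannon entropy (natural log) of a finite random variable. -/
noncomputable def ent {α : Type} [Fintype α] (μ : FinProb Ω) (A : Ω → α) : ℝ :=
  ∑ a, Real.negMulLog (prEq μ A a)

/-- Conditional entropy `H(A | B)`. -/
noncomputable def condEnt {α β : Type} [Fintype α] [Fintype β]
    (μ : FinProb Ω) (A : Ω → α) (B : Ω → β) : ℝ :=
  ent μ (fun ω => (A ω, B ω)) - ent μ B

/-- Mutual information `I(A ; B)`. -/
noncomputable def mutInf {α β : Type} [Fintype α] [Fintype β]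
    (μ : FinProb Ω) (A : Ω → α) (B : Ω → β) : ℝ :=
  ent μ A + ent μ B - ent μ (fun ω => (A ω, B ω))

/-- Conditional mutual information `I(A ; B | C)`. -/
noncomputable def condMutInf {α β γ : Type} [Fintype α] [Fintype β] [Fintype γ]
    (μ : FinProb Ω) (A : Ω → α) (B : Ω → β) (Cc : Ω → γ) : ℝ :=
  ent μ (fun ω => (A ω, Cc ω)) + ent μ (fun ω => (B ω, Cc ω))
    - ent μ (fun ω => (A ω, B ω, Cc ω)) - ent μ Cc

/-- Gács–Körner common information `CI_GK(A ; B)`: the supremum of `H(Q)` over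
random variables `Q` that are almost surely a deterministic function of `A`
and almost surely a deterministic function of `B`. -/
noncomputable def gkInf {α β : Type} [Fintype α] [Fintype β]
    (μ : FinProb Ω) (A : Ω → α) (B : Ω → β) : ℝ :=
  sSup { h : ℝ | ∃ (n : ℕ) (f : α → Fin n) (g : β → Fin n),
    (∀ ω, 0 < μ.p ω → f (A ω) = g (B ω)) ∧ h = ent μ (fun ω => f (A ω)) }

/-- Residual information `RI(A ; B) = I(A ; B) − CI_GK(A ; B)`. -/
noncomputable def resInf {α β : Type} [Fintype α] [Fintype β]
    (μ : FinProb Ω) (A : Ω → α) (B : Ω → β) : ℝ :=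
  mutInf μ A B - gkInf μ A B

section AuxBasic

variable {Ω : Type} [Fintype Ω]

lemma prEq_nonneg {α : Type} (μ : FinProb Ω) (A : Ω → α) (a : α) : 0 ≤ prEq μ A a :=
  Finset.sum_nonneg fun ω _ => by by_cases h : A ω = a <;> simp [prEq, h, μ.nonneg ω]

lemma sum_prEq {α : Type} [Fintype α] (μ : FinProb Ω) (A : Ω → α) :
    ∑ a : α, prEq μ A a = 1 := by
  unfold prEq
  rw [Finset.sum_comm]
  have : ∀ ω : Ω, ∑ a : α, (if A ω = a then μ.p ω else 0) = μ.p ω := by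
    intro ω
    simp
  rw [Finset.sum_congr rfl fun ω _ => this ω, μ.sum_one]

lemma prEq_le_one {α : Type} (μ : FinProb Ω) (A : Ω → α) (a : α) : prEq μ A a ≤ 1 := by
  rw [← μ.sum_one]
  refine Finset.sum_le_sum fun ω _ => ?_
  by_cases h : A ω = a <;> simp [h, μ.nonneg ω]

lemma prEq_self_le {α : Type} (μ : FinProb Ω) (A : Ω → α) (ω₀ : Ω) :
    μ.p ω₀ ≤ prEq μ A (A ω₀) := by
  have := Finset.single_le_sum (f := fun ω => if A ω = A ω₀ then μ.p ω else 0)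
    (fun ω _ => by by_cases h : A ω = A ω₀ <;> simp [h, μ.nonneg ω]) (Finset.mem_univ ω₀)
  simpa [prEq] using this

lemma prEq_eq_zero_of_forall_ne {α : Type} (μ : FinProb Ω) (A : Ω → α) (a : α)
    (h : ∀ ω, A ω ≠ a) : prEq μ A a = 0 := by
  unfold prEq
  exact Finset.sum_eq_zero fun ω _ => by simp [h ω]

lemma prEq_comp_eq_sum {α β : Type} [Fintype α] (μ : FinProb Ω) (f : α → β) (T : Ω → α)
    (y : β) :
    prEq μ (fun ω => f (T ω)) y = ∑ x : α, if f x = y then prEq μ T x else 0 := by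
  unfold prEq
  have h1 : ∀ x : α, (if f x = y then (∑ ω, if T ω = x then μ.p ω else 0) else 0)
      = ∑ ω, if T ω = x then (if f x = y then μ.p ω else 0) else 0 := by
    intro x
    by_cases h : f x = y <;> simp [h]
  rw [Finset.sum_congr rfl fun x _ => h1 x, Finset.sum_comm]
  refine Finset.sum_congr rfl fun ω _ => ?_
  rw [Finset.sum_ite_eq Finset.univ (T ω) (fun x => if f x = y then μ.p ω else 0)]
  simp

lemma prEq_comp {α β : Type} (μ : FinProb Ω) {f : α → β} (hf : Function.Injective f)
    (T : Ω → α) (x : α) : prEq μ (fun ω => f (T ω)) (f x) = prEq μ T x := by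
  unfold prEq
  refine Finset.sum_congr rfl fun ω _ => ?_
  congr 1
  simp [hf.eq_iff]

lemma prEq_le_comp {α β : Type} [Fintype α] (μ : FinProb Ω) (f : α → β) (T : Ω → α)
    (x : α) : prEq μ T x ≤ prEq μ (fun ω => f (T ω)) (f x) := by
  rw [prEq_comp_eq_sum μ f T (f x)]
  have := Finset.single_le_sum (f := fun x' => if f x' = f x then prEq μ T x' else 0)
    (fun x' _ => by by_cases h : f x' = f x <;> simp [h, prEq_nonneg]) (Finset.mem_univ x)
  simpa using this

lemma ent_comp {α β : Type} [Fintype α] [Fintype β] (μ : FinProb Ω) {f : α → β}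
    (hf : Function.Injective f) (T : Ω → α) :
    ent μ (fun ω => f (T ω)) = ent μ T := by
  unfold ent
  have h0 : ∀ b ∈ Finset.univ, b ∉ Finset.univ.image f →
      Real.negMulLog (prEq μ (fun ω => f (T ω)) b) = 0 := by
    intro b _ hb
    have : prEq μ (fun ω => f (T ω)) b = 0 :=
      prEq_eq_zero_of_forall_ne μ _ _ fun ω h =>
        hb (Finset.mem_image.2 ⟨T ω, Finset.mem_univ _, h⟩)
    simp [this]
  rw [← Finset.sum_subset (Finset.subset_univ (Finset.univ.image f)) h0,
    Finset.sum_image (fun x _ y _ h => hf h)]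
  exact Finset.sum_congr rfl fun x _ => by rw [prEq_comp μ hf]

lemma ent_eq_sum {α : Type} [Fintype α] (μ : FinProb Ω) (T : Ω → α) :
    ent μ T = ∑ x : α, prEq μ T x * (-Real.log (prEq μ T x)) := by
  unfold ent
  exact Finset.sum_congr rfl fun x _ => by rw [Real.negMulLog]; ring

lemma ent_comp_eq_sum {α β : Type} [Fintype α] [Fintype β] (μ : FinProb Ω) (f : α → β)
    (T : Ω → α) :
    ent μ (fun ω => f (T ω))
      = ∑ x : α, prEq μ T x * (-Real.log (prEq μ (fun ω => f (T ω)) (f x))) := by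
  rw [ent_eq_sum]
  have h1 : ∀ b : β, prEq μ (fun ω => f (T ω)) b * (-Real.log (prEq μ (fun ω => f (T ω)) b))
      = ∑ x : α, (if f x = b then prEq μ T x * (-Real.log (prEq μ (fun ω => f (T ω)) (f x))) else 0) := by
    intro b
    nth_rewrite 1 [prEq_comp_eq_sum μ f T b]
    rw [Finset.sum_mul]
    refine Finset.sum_congr rfl fun x _ => ?_
    by_cases h : f x = b
    · subst h; simp
    · simp [h]
  rw [Finset.sum_congr rfl fun b _ => h1 b, Finset.sum_comm]
  refine Finset.sum_congr rfl fun x _ => ?_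
  rw [Finset.sum_ite_eq Finset.univ (f x)
    (fun _ => prEq μ T x * (-Real.log (prEq μ (fun ω => f (T ω)) (f x))))]
  simp

lemma negMulLog_le_one {x : ℝ} (hx : 0 ≤ x) : Real.negMulLog x ≤ 1 := by
  rcases eq_or_lt_of_le hx with h | h
  · simp [← h]
  · have h1 : Real.log x⁻¹ ≤ x⁻¹ - 1 := Real.log_le_sub_one_of_pos (by positivity)
    rw [Real.log_inv] at h1
    have : Real.negMulLog x = x * (-Real.log x) := by rw [Real.negMulLog]; ring
    rw [this]
    have h2 : x * (-Real.log x) ≤ x * (x⁻¹ - 1) := by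
      apply mul_le_mul_of_nonneg_left _ hx
      linarith
    have h3 : x * (x⁻¹ - 1) = 1 - x := by field_simp
    linarith

lemma ent_comp_le_card {α β : Type} [Fintype α] [Fintype β] (μ : FinProb Ω) (f : α → β)
    (A : Ω → α) : ent μ (fun ω => f (A ω)) ≤ Fintype.card α := by
  unfold ent
  have h0 : ∀ b ∈ Finset.univ, b ∉ Finset.univ.image f →
      Real.negMulLog (prEq μ (fun ω => f (A ω)) b) = 0 := by
    intro b _ hb
    have : prEq μ (fun ω => f (A ω)) b = 0 :=
      prEq_eq_zero_of_forall_ne μ _ _ fun ω h =>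
        hb (Finset.mem_image.2 ⟨A ω, Finset.mem_univ _, h⟩)
    simp [this]
  rw [← Finset.sum_subset (Finset.subset_univ (Finset.univ.image f)) h0]
  calc ∑ b ∈ Finset.univ.image f, Real.negMulLog (prEq μ (fun ω => f (A ω)) b)
      ≤ ∑ _b ∈ Finset.univ.image f, (1 : ℝ) :=
        Finset.sum_le_sum fun b _ => negMulLog_le_one (prEq_nonneg μ _ b)
    _ = (Finset.univ.image f).card := by simp
    _ ≤ Fintype.card α := by
        have h := Finset.card_image_le (s := (Finset.univ : Finset α)) (f := f)
        rw [Finset.card_univ] at h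
        exact_mod_cast h

lemma ent_unit (μ : FinProb Ω) : ent μ (fun _ => ()) = 0 := by
  unfold ent
  have h1 : prEq μ (fun _ : Ω => ()) () = 1 := by
    unfold prEq; simpa using μ.sum_one
  rw [Fintype.sum_unique]
  rw [h1, Real.negMulLog_one]

end AuxBasic

section AuxCMI

variable {Ω : Type} [Fintype Ω] {α β γ : Type} [Fintype α] [Fintype β] [Fintype γ]

lemma sum_prEq_pair_fst (μ : FinProb Ω) (A : Ω → α) (C : Ω → γ) (c : γ) :
    ∑ a : α, prEq μ (fun ω => (A ω, C ω)) (a, c) = prEq μ C c := by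
  have h : prEq μ C c = ∑ x : α × γ, if x.2 = c then prEq μ (fun ω => (A ω, C ω)) x else 0 :=
    prEq_comp_eq_sum μ Prod.snd (fun ω => (A ω, C ω)) c
  rw [h, Fintype.sum_prod_type]
  refine Finset.sum_congr rfl fun a _ => ?_
  simp

lemma condMutInf_eq_sum (μ : FinProb Ω) (A : Ω → α) (B : Ω → β) (C : Ω → γ) :
    condMutInf μ A B C = ∑ x : α × β × γ,
      prEq μ (fun ω => (A ω, B ω, C ω)) x *
        (Real.log (prEq μ (fun ω => (A ω, B ω, C ω)) x)
          + Real.log (prEq μ C x.2.2)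
          - Real.log (prEq μ (fun ω => (A ω, C ω)) (x.1, x.2.2))
          - Real.log (prEq μ (fun ω => (B ω, C ω)) (x.2.1, x.2.2))) := by
  have hAC : ent μ (fun ω => (A ω, C ω)) = ∑ x : α × β × γ,
      prEq μ (fun ω => (A ω, B ω, C ω)) x *
        (-Real.log (prEq μ (fun ω => (A ω, C ω)) (x.1, x.2.2))) :=
    ent_comp_eq_sum μ (fun x : α × β × γ => (x.1, x.2.2)) (fun ω => (A ω, B ω, C ω))
  have hBC : ent μ (fun ω => (B ω, C ω)) = ∑ x : α × β × γ,
      prEq μ (fun ω => (A ω, B ω, C ω)) x *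
        (-Real.log (prEq μ (fun ω => (B ω, C ω)) (x.2.1, x.2.2))) :=
    ent_comp_eq_sum μ (fun x : α × β × γ => (x.2.1, x.2.2)) (fun ω => (A ω, B ω, C ω))
  have hC : ent μ C = ∑ x : α × β × γ,
      prEq μ (fun ω => (A ω, B ω, C ω)) x * (-Real.log (prEq μ C x.2.2)) :=
    ent_comp_eq_sum μ (fun x : α × β × γ => x.2.2) (fun ω => (A ω, B ω, C ω))
  have hJ := ent_eq_sum μ (fun ω => (A ω, B ω, C ω))
  unfold condMutInf
  rw [hAC, hBC, hJ, hC, ← Finset.sum_add_distrib, ← Finset.sum_sub_distrib,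
    ← Finset.sum_sub_distrib]
  exact Finset.sum_congr rfl fun x _ => by ring

/-- The factorization property expressing `I(A;B|C) = 0`. -/
def IndepFact {Ω : Type} [Fintype Ω] {α β γ : Type} (μ : FinProb Ω)
    (A : Ω → α) (B : Ω → β) (C : Ω → γ) : Prop :=
  ∀ x : α × β × γ,
    prEq μ (fun ω => (A ω, B ω, C ω)) x * prEq μ C x.2.2
      = prEq μ (fun ω => (A ω, C ω)) (x.1, x.2.2) * prEq μ (fun ω => (B ω, C ω)) (x.2.1, x.2.2)

lemma sum_ratio_eq (μ : FinProb Ω) (A : Ω → α) (B : Ω → β) (C : Ω → γ) :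
    ∑ x : α × β × γ, (if 0 < prEq μ C x.2.2
        then prEq μ (fun ω => (A ω, C ω)) (x.1, x.2.2)
          * prEq μ (fun ω => (B ω, C ω)) (x.2.1, x.2.2) / prEq μ C x.2.2
        else 0)
      = ∑ c : γ, (if 0 < prEq μ C c then prEq μ C c else 0) := by
  rw [Fintype.sum_prod_type]
  have e1 : ∀ a : α, (∑ y : β × γ, (if 0 < prEq μ C y.2
        then prEq μ (fun ω => (A ω, C ω)) (a, y.2)
          * prEq μ (fun ω => (B ω, C ω)) (y.1, y.2) / prEq μ C y.2
        else 0))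
      = ∑ c : γ, ∑ b : β, (if 0 < prEq μ C c
        then prEq μ (fun ω => (A ω, C ω)) (a, c)
          * prEq μ (fun ω => (B ω, C ω)) (b, c) / prEq μ C c
        else 0) := by
    intro a
    rw [Fintype.sum_prod_type]
    exact Finset.sum_comm
  rw [Finset.sum_congr rfl fun a _ => e1 a, Finset.sum_comm]
  refine Finset.sum_congr rfl fun c _ => ?_
  by_cases hc : 0 < prEq μ C c
  · simp only [if_pos hc]
    have e2 : ∀ a : α, (∑ b : β, prEq μ (fun ω => (A ω, C ω)) (a, c)
          * prEq μ (fun ω => (B ω, C ω)) (b, c) / prEq μ C c)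
        = prEq μ (fun ω => (A ω, C ω)) (a, c) := by
      intro a
      rw [← Finset.sum_div, ← Finset.mul_sum, sum_prEq_pair_fst μ B C c,
        mul_div_assoc, div_self hc.ne', mul_one]
    rw [Finset.sum_congr rfl fun a _ => e2 a, sum_prEq_pair_fst μ A C c]
  · simp only [if_neg hc]
    simp

lemma condMutInf_key (μ : FinProb Ω) (A : Ω → α) (B : Ω → β) (C : Ω → γ) :
    0 ≤ condMutInf μ A B C ∧ (condMutInf μ A B C = 0 → IndepFact μ A B C) := by
  classical
  set p : α × β × γ → ℝ := prEq μ (fun ω => (A ω, B ω, C ω)) with hp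
  set pAC : α × γ → ℝ := prEq μ (fun ω => (A ω, C ω)) with hpac
  set pBC : β × γ → ℝ := prEq μ (fun ω => (B ω, C ω)) with hpbc
  set pC : γ → ℝ := prEq μ C with hpc
  have hple1 : ∀ x : α × β × γ, p x ≤ pAC (x.1, x.2.2) := fun x =>
    prEq_le_comp μ (fun y : α × β × γ => (y.1, y.2.2)) (fun ω => (A ω, B ω, C ω)) x
  have hple2 : ∀ x : α × β × γ, p x ≤ pBC (x.2.1, x.2.2) := fun x =>
    prEq_le_comp μ (fun y : α × β × γ => (y.2.1, y.2.2)) (fun ω => (A ω, B ω, C ω)) x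
  have hple3 : ∀ x : α × β × γ, p x ≤ pC x.2.2 := fun x =>
    prEq_le_comp μ (fun y : α × β × γ => y.2.2) (fun ω => (A ω, B ω, C ω)) x
  have hacle : ∀ y : α × γ, pAC y ≤ pC y.2 := fun y =>
    prEq_le_comp μ Prod.snd (fun ω => (A ω, C ω)) y
  have hpn : ∀ x, 0 ≤ p x := fun x => prEq_nonneg μ _ x
  have hpacn : ∀ y, 0 ≤ pAC y := fun y => prEq_nonneg μ _ y
  have hpbcn : ∀ y, 0 ≤ pBC y := fun y => prEq_nonneg μ _ y
  have hpcn : ∀ c, 0 ≤ pC c := fun c => prEq_nonneg μ _ c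
  set t : α × β × γ → ℝ := fun x => p x * (Real.log (p x) + Real.log (pC x.2.2)
    - Real.log (pAC (x.1, x.2.2)) - Real.log (pBC (x.2.1, x.2.2))) with ht
  set r : α × β × γ → ℝ := fun x => pAC (x.1, x.2.2) * pBC (x.2.1, x.2.2) / pC x.2.2 with hr
  have hrn : ∀ x, 0 ≤ r x := fun x => div_nonneg (mul_nonneg (hpacn _) (hpbcn _)) (hpcn _)
  have hsum : condMutInf μ A B C = ∑ x : α × β × γ, t x := condMutInf_eq_sum μ A B C
  set S : Finset (α × β × γ) := Finset.univ.filter (fun x => 0 < p x) with hS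
  set S' : Finset (α × β × γ) := Finset.univ.filter (fun x => 0 < pC x.2.2) with hS'
  have hSS' : S ⊆ S' := by
    intro x hx
    rw [hS, Finset.mem_filter] at hx
    rw [hS', Finset.mem_filter]
    exact ⟨hx.1, lt_of_lt_of_le hx.2 (hple3 x)⟩
  have hdrop : ∑ x : α × β × γ, t x = ∑ x ∈ S, t x := by
    rw [hS]
    refine (Finset.sum_filter_of_ne fun x _ hne => ?_).symm
    rcases eq_or_lt_of_le (hpn x) with h | h
    · exact absurd (by rw [ht]; simp [← h]) hne
    · exact h
  have hpsum : ∑ x ∈ S, p x = 1 := by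
    rw [hS]
    rw [Finset.sum_filter_of_ne fun x _ hne => ?_]
    · exact sum_prEq μ _
    · rcases eq_or_lt_of_le (hpn x) with h | h
      · exact absurd h.symm hne
      · exact h
  have hrS' : ∑ x ∈ S', r x = ∑ c : γ, (if 0 < pC c then pC c else 0) := by
    rw [hS', Finset.sum_filter]
    exact sum_ratio_eq μ A B C
  have hrS'le : ∑ x ∈ S', r x ≤ 1 := by
    rw [hrS']
    calc ∑ c : γ, (if 0 < pC c then pC c else 0) ≤ ∑ c : γ, pC c :=
          Finset.sum_le_sum fun c _ => by by_cases h : 0 < pC c <;> simp [h, hpcn c]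
      _ = 1 := sum_prEq μ C
  have hrSle : ∑ x ∈ S, r x ≤ ∑ x ∈ S', r x :=
    Finset.sum_le_sum_of_subset_of_nonneg hSS' fun x _ _ => hrn x
  have hlow : ∀ x ∈ S, p x - r x ≤ t x ∧ (t x = p x - r x →
      p x * pC x.2.2 = pAC (x.1, x.2.2) * pBC (x.2.1, x.2.2)) := by
    intro x hx
    rw [hS, Finset.mem_filter] at hx
    have hpx : 0 < p x := hx.2
    have h1 : 0 < pAC (x.1, x.2.2) := lt_of_lt_of_le hpx (hple1 x)
    have h2 : 0 < pBC (x.2.1, x.2.2) := lt_of_lt_of_le hpx (hple2 x)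
    have h3 : 0 < pC x.2.2 := lt_of_lt_of_le hpx (hple3 x)
    set ρ : ℝ := (p x * pC x.2.2) / (pAC (x.1, x.2.2) * pBC (x.2.1, x.2.2)) with hρ
    have hρpos : 0 < ρ := by rw [hρ]; positivity
    have hlog : Real.log (p x) + Real.log (pC x.2.2) - Real.log (pAC (x.1, x.2.2))
        - Real.log (pBC (x.2.1, x.2.2)) = Real.log ρ := by
      rw [hρ, Real.log_div (by positivity) (by positivity),
        Real.log_mul hpx.ne' h3.ne', Real.log_mul h1.ne' h2.ne']
      ring
    have htx : t x = p x * Real.log ρ := by rw [ht]; simp only []; rw [hlog]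
    have hrr : p x * ρ⁻¹ = r x := by
      rw [hρ, hr]
      field_simp
    have hlb : 1 - ρ⁻¹ ≤ Real.log ρ := by
      have := Real.log_le_sub_one_of_pos (inv_pos.2 hρpos)
      rw [Real.log_inv] at this
      linarith
    constructor
    · rw [htx]
      have := mul_le_mul_of_nonneg_left hlb (le_of_lt hpx)
      calc p x - r x = p x * (1 - ρ⁻¹) := by rw [mul_sub, mul_one, hrr]
        _ ≤ p x * Real.log ρ := this
    · intro heq
      have h4 : p x * Real.log ρ = p x * (1 - ρ⁻¹) := by
        rw [← htx, heq, mul_sub, mul_one, hrr]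
      have h5 : Real.log ρ = 1 - ρ⁻¹ := mul_left_cancel₀ hpx.ne' h4
      have hρ1 : ρ = 1 := by
        by_contra hne
        have h6 : Real.log ρ⁻¹ < ρ⁻¹ - 1 :=
          Real.log_lt_sub_one_of_pos (inv_pos.2 hρpos) (fun h => hne (by
            have := congrArg Inv.inv h
            simpa using this))
        rw [Real.log_inv] at h6
        linarith
      have := hρ1
      rw [hρ] at this
      field_simp at this
      linarith [this]
  have hlowsum : 1 - ∑ x ∈ S, r x ≤ ∑ x ∈ S, t x := by
    have := Finset.sum_le_sum fun x hx => (hlow x hx).1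
    rw [Finset.sum_sub_distrib, hpsum] at this
    exact this
  have hnonneg : 0 ≤ condMutInf μ A B C := by
    rw [hsum, hdrop]
    have : (1 : ℝ) - ∑ x ∈ S, r x ≥ 1 - 1 := by linarith [hrSle.trans hrS'le]
    linarith
  refine ⟨hnonneg, fun h0 => ?_⟩
  have hts : ∑ x ∈ S, t x = 0 := by rw [← hdrop, ← hsum, h0]
  have hr1 : ∑ x ∈ S, r x = 1 := by
    have h1 : ∑ x ∈ S, r x ≤ 1 := hrSle.trans hrS'le
    have h2 : 1 - ∑ x ∈ S, r x ≤ 0 := by rw [hts] at hlowsum; exact hlowsum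
    linarith
  have hexcess : ∑ x ∈ S, (t x - (p x - r x)) = 0 := by
    rw [Finset.sum_sub_distrib, Finset.sum_sub_distrib, hpsum, hr1, hts]
    ring
  have heach : ∀ x ∈ S, t x - (p x - r x) = 0 := by
    have := (Finset.sum_eq_zero_iff_of_nonneg fun x hx => by
      have := (hlow x hx).1; linarith).1 hexcess
    exact this
  have hrdiff : ∀ x ∈ S' \ S, r x = 0 := by
    have hsd : ∑ x ∈ S' \ S, r x = 0 := by
      have := Finset.sum_sdiff (f := r) hSS'
      rw [hr1, hrS'] at this
      have h2 : ∑ x ∈ S', r x = 1 := le_antisymm hrS'le (by rw [← hr1]; exact hrSle)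
      rw [hrS'] at h2
      linarith [this, h2]
    exact fun x hx => le_antisymm (by
      have := (Finset.sum_eq_zero_iff_of_nonneg fun y _ => hrn y).1 hsd x hx
      exact le_of_eq this) (hrn x)
  intro x
  show p x * pC x.2.2 = pAC (x.1, x.2.2) * pBC (x.2.1, x.2.2)
  by_cases hx : 0 < p x
  · have hxS : x ∈ S := by rw [hS, Finset.mem_filter]; exact ⟨Finset.mem_univ _, hx⟩
    have := heach x hxS
    exact (hlow x hxS).2 (by linarith)
  · have hpx0 : p x = 0 := le_antisymm (not_lt.1 hx) (hpn x)
    by_cases hc : 0 < pC x.2.2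
    · have hxS' : x ∈ S' \ S := by
        rw [Finset.mem_sdiff, hS', hS, Finset.mem_filter, Finset.mem_filter]
        exact ⟨⟨Finset.mem_univ _, hc⟩, fun hh => hx hh.2⟩
      have hr0 : r x = 0 := hrdiff x hxS'
      rw [hr] at hr0
      simp only [] at hr0
      have := (div_eq_zero_iff.1 hr0).resolve_right hc.ne'
      rw [hpx0, this]
      ring
    · have hc0 : pC x.2.2 = 0 := le_antisymm (not_lt.1 hc) (hpcn _)
      have hac0 : pAC (x.1, x.2.2) = 0 :=
        le_antisymm (by rw [← hc0]; exact hacle (x.1, x.2.2)) (hpacn _)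
      rw [hpx0, hc0, hac0]
      ring

lemma condMutInf_nonneg (μ : FinProb Ω) (A : Ω → α) (B : Ω → β) (C : Ω → γ) :
    0 ≤ condMutInf μ A B C := (condMutInf_key μ A B C).1

lemma indepFact_of_condMutInf_eq_zero (μ : FinProb Ω) (A : Ω → α) (B : Ω → β) (C : Ω → γ)
    (h : condMutInf μ A B C = 0) : IndepFact μ A B C := (condMutInf_key μ A B C).2 h

lemma condMutInf_eq_zero_of_indepFact (μ : FinProb Ω) (A : Ω → α) (B : Ω → β) (C : Ω → γ)
    (h : IndepFact μ A B C) : condMutInf μ A B C = 0 := by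
  rw [condMutInf_eq_sum]
  refine Finset.sum_eq_zero fun x _ => ?_
  rcases eq_or_lt_of_le (prEq_nonneg μ (fun ω => (A ω, B ω, C ω)) x) with hx | hx
  · rw [← hx, zero_mul]
  · have h1 : 0 < prEq μ (fun ω => (A ω, C ω)) (x.1, x.2.2) := lt_of_lt_of_le hx
      (prEq_le_comp μ (fun y : α × β × γ => (y.1, y.2.2)) (fun ω => (A ω, B ω, C ω)) x)
    have h2 : 0 < prEq μ (fun ω => (B ω, C ω)) (x.2.1, x.2.2) := lt_of_lt_of_le hx
      (prEq_le_comp μ (fun y : α × β × γ => (y.2.1, y.2.2)) (fun ω => (A ω, B ω, C ω)) x)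
    have h3 : 0 < prEq μ C x.2.2 := lt_of_lt_of_le hx
      (prEq_le_comp μ (fun y : α × β × γ => y.2.2) (fun ω => (A ω, B ω, C ω)) x)
    have hl : Real.log (prEq μ (fun ω => (A ω, B ω, C ω)) x * prEq μ C x.2.2)
        = Real.log (prEq μ (fun ω => (A ω, C ω)) (x.1, x.2.2)
            * prEq μ (fun ω => (B ω, C ω)) (x.2.1, x.2.2)) := by rw [h x]
    rw [Real.log_mul hx.ne' h3.ne', Real.log_mul h1.ne' h2.ne'] at hl
    have : Real.log (prEq μ (fun ω => (A ω, B ω, C ω)) x)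
        + Real.log (prEq μ C x.2.2)
        - Real.log (prEq μ (fun ω => (A ω, C ω)) (x.1, x.2.2))
        - Real.log (prEq μ (fun ω => (B ω, C ω)) (x.2.1, x.2.2)) = 0 := by linarith
    rw [this, mul_zero]

end AuxCMI

section AuxAlg

variable {Ω : Type} [Fintype Ω] {α β γ δ ε : Type}
  [Fintype α] [Fintype β] [Fintype γ] [Fintype δ] [Fintype ε]

lemma condMutInf_comm (μ : FinProb Ω) (A : Ω → α) (B : Ω → β) (C : Ω → γ) :
    condMutInf μ A B C = condMutInf μ B A C := by
  have h : ent μ (fun ω => (B ω, A ω, C ω)) = ent μ (fun ω => (A ω, B ω, C ω)) :=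
    ent_comp μ (show Function.Injective (fun x : α × β × γ => (x.2.1, x.1, x.2.2)) by
      rintro ⟨a, b, c⟩ ⟨a', b', c'⟩ hxy; simp_all [Prod.ext_iff]) (fun ω => (A ω, B ω, C ω))
  simp only [condMutInf]
  rw [h]
  ring

lemma condMutInf_eq_condEnt_sub (μ : FinProb Ω) (A : Ω → α) (B : Ω → β) (C : Ω → γ) :
    condMutInf μ A B C = condEnt μ A C - condEnt μ A (fun ω => (B ω, C ω)) := by
  simp only [condMutInf, condEnt]
  ring

lemma condEnt_nonneg (μ : FinProb Ω) (B : Ω → β) (C : Ω → γ) : 0 ≤ condEnt μ B C := by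
  have h := condMutInf_nonneg μ B B C
  have hdup : ent μ (fun ω => (B ω, B ω, C ω)) = ent μ (fun ω => (B ω, C ω)) :=
    ent_comp μ (show Function.Injective (fun y : β × γ => (y.1, y.1, y.2)) by
      rintro ⟨b, c⟩ ⟨b', c'⟩ hxy; simp_all [Prod.ext_iff]) (fun ω => (B ω, C ω))
  simp only [condMutInf] at h
  rw [hdup] at h
  simp only [condEnt]
  linarith

lemma condMutInf_le_condEnt (μ : FinProb Ω) (A : Ω → α) (B : Ω → β) (C : Ω → γ) :
    condMutInf μ A B C ≤ condEnt μ A C := by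
  rw [condMutInf_eq_condEnt_sub]
  have := condEnt_nonneg μ A (fun ω => (B ω, C ω))
  linarith

lemma chainRule (μ : FinProb Ω) (A : Ω → α) (A' : Ω → δ) (B : Ω → β) (C : Ω → γ) :
    condMutInf μ (fun ω => (A ω, A' ω)) B C
      = condMutInf μ A' B C + condMutInf μ A B (fun ω => (A' ω, C ω)) := by
  simp only [condMutInf]
  have r1 : ent μ (fun ω => ((A ω, A' ω), C ω)) = ent μ (fun ω => (A ω, A' ω, C ω)) :=
    ent_comp μ (show Function.Injective (fun x : α × δ × γ => ((x.1, x.2.1), x.2.2)) by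
      rintro ⟨a, b, c⟩ ⟨a', b', c'⟩ hxy; simp_all [Prod.ext_iff]) (fun ω => (A ω, A' ω, C ω))
  have r2 : ent μ (fun ω => ((A ω, A' ω), B ω, C ω))
      = ent μ (fun ω => (A ω, B ω, A' ω, C ω)) :=
    ent_comp μ (show Function.Injective
        (fun x : α × β × δ × γ => ((x.1, x.2.2.1), x.2.1, x.2.2.2)) by
      rintro ⟨a, b, c, d⟩ ⟨a', b', c', d'⟩ hxy; simp_all [Prod.ext_iff])
      (fun ω => (A ω, B ω, A' ω, C ω))
  have r3 : ent μ (fun ω => (A' ω, B ω, C ω)) = ent μ (fun ω => (B ω, A' ω, C ω)) :=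
    ent_comp μ (show Function.Injective (fun x : β × δ × γ => (x.2.1, x.1, x.2.2)) by
      rintro ⟨a, b, c⟩ ⟨a', b', c'⟩ hxy; simp_all [Prod.ext_iff]) (fun ω => (B ω, A' ω, C ω))
  rw [r1, r2, r3]
  ring

lemma condMutInf_comp₁ (μ : FinProb Ω) {g : α → δ} (hg : Function.Injective g)
    (A : Ω → α) (B : Ω → β) (C : Ω → γ) :
    condMutInf μ (fun ω => g (A ω)) B C = condMutInf μ A B C := by
  simp only [condMutInf]
  have r1 : ent μ (fun ω => (g (A ω), C ω)) = ent μ (fun ω => (A ω, C ω)) :=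
    ent_comp μ (show Function.Injective (fun x : α × γ => (g x.1, x.2)) by
      rintro ⟨a, c⟩ ⟨a', c'⟩ hxy; simp_all [Prod.ext_iff, hg.eq_iff]) (fun ω => (A ω, C ω))
  have r2 : ent μ (fun ω => (g (A ω), B ω, C ω)) = ent μ (fun ω => (A ω, B ω, C ω)) :=
    ent_comp μ (show Function.Injective (fun x : α × β × γ => (g x.1, x.2)) by
      rintro ⟨a, b, c⟩ ⟨a', b', c'⟩ hxy; simp_all [Prod.ext_iff, hg.eq_iff])
      (fun ω => (A ω, B ω, C ω))
  rw [r1, r2]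

lemma condMutInf_comp₃ (μ : FinProb Ω) {g : γ → δ} (hg : Function.Injective g)
    (A : Ω → α) (B : Ω → β) (C : Ω → γ) :
    condMutInf μ A B (fun ω => g (C ω)) = condMutInf μ A B C := by
  simp only [condMutInf]
  have r1 : ent μ (fun ω => (A ω, g (C ω))) = ent μ (fun ω => (A ω, C ω)) :=
    ent_comp μ (show Function.Injective (fun x : α × γ => (x.1, g x.2)) by
      rintro ⟨a, c⟩ ⟨a', c'⟩ hxy; simp_all [Prod.ext_iff, hg.eq_iff]) (fun ω => (A ω, C ω))
  have r2 : ent μ (fun ω => (B ω, g (C ω))) = ent μ (fun ω => (B ω, C ω)) :=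
    ent_comp μ (show Function.Injective (fun x : β × γ => (x.1, g x.2)) by
      rintro ⟨a, c⟩ ⟨a', c'⟩ hxy; simp_all [Prod.ext_iff, hg.eq_iff]) (fun ω => (B ω, C ω))
  have r3 : ent μ (fun ω => (A ω, B ω, g (C ω))) = ent μ (fun ω => (A ω, B ω, C ω)) :=
    ent_comp μ (show Function.Injective (fun x : α × β × γ => (x.1, x.2.1, g x.2.2)) by
      rintro ⟨a, b, c⟩ ⟨a', b', c'⟩ hxy; simp_all [Prod.ext_iff, hg.eq_iff])
      (fun ω => (A ω, B ω, C ω))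
  have r4 : ent μ (fun ω => g (C ω)) = ent μ C := ent_comp μ hg C
  rw [r1, r2, r3, r4]

lemma condEnt_comp₂ (μ : FinProb Ω) {g : γ → δ} (hg : Function.Injective g)
    (A : Ω → α) (C : Ω → γ) :
    condEnt μ A (fun ω => g (C ω)) = condEnt μ A C := by
  simp only [condEnt]
  have r1 : ent μ (fun ω => (A ω, g (C ω))) = ent μ (fun ω => (A ω, C ω)) :=
    ent_comp μ (show Function.Injective (fun x : α × γ => (x.1, g x.2)) by
      rintro ⟨a, c⟩ ⟨a', c'⟩ hxy; simp_all [Prod.ext_iff, hg.eq_iff]) (fun ω => (A ω, C ω))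
  have r4 : ent μ (fun ω => g (C ω)) = ent μ C := ent_comp μ hg C
  rw [r1, r4]

lemma le_condMutInf_pair (μ : FinProb Ω) (A : Ω → α) (A' : Ω → δ) (B : Ω → β)
    (B' : Ω → ε) (C : Ω → γ) :
    condMutInf μ A' B' C
      ≤ condMutInf μ (fun ω => (A ω, A' ω)) (fun ω => (B ω, B' ω)) C := by
  have h1 := chainRule μ A A' (fun ω => (B ω, B' ω)) C
  have h2 := condMutInf_nonneg μ A (fun ω => (B ω, B' ω)) (fun ω => (A' ω, C ω))
  have h3 := condMutInf_comm μ A' (fun ω => (B ω, B' ω)) C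
  have h4 := chainRule μ B B' A' C
  have h5 := condMutInf_nonneg μ B A' (fun ω => (B' ω, C ω))
  have h6 := condMutInf_comm μ B' A' C
  linarith

lemma mutInf_eq_condMutInf_unit (μ : FinProb Ω) (A : Ω → α) (B : Ω → β) :
    mutInf μ A B = condMutInf μ A B (fun _ => ()) := by
  simp only [mutInf, condMutInf]
  have r1 : ent μ (fun ω => (A ω, ())) = ent μ A :=
    ent_comp μ (show Function.Injective (fun a : α => (a, ())) by
      intro x y hxy; simpa using congrArg Prod.fst hxy) A
  have r2 : ent μ (fun ω => (B ω, ())) = ent μ B :=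
    ent_comp μ (show Function.Injective (fun a : β => (a, ())) by
      intro x y hxy; simpa using congrArg Prod.fst hxy) B
  have r3 : ent μ (fun ω => (A ω, B ω, ())) = ent μ (fun ω => (A ω, B ω)) :=
    ent_comp μ (show Function.Injective (fun y : α × β => (y.1, y.2, ())) by
      rintro ⟨a, b⟩ ⟨a', b'⟩ hxy; simp_all [Prod.ext_iff]) (fun ω => (A ω, B ω))
  rw [r1, r2, r3, ent_unit]
  ring

end AuxAlg

section AuxGK

variable {Ω : Type} [Fintype Ω]

lemma prEq_pair_det {κ ι : Type} (μ : FinProb Ω) (T : Ω → κ) (h : κ → ι) (k : κ) (l : ι) :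
    prEq μ (fun ω => (T ω, h (T ω))) (k, l) = if h k = l then prEq μ T k else 0 := by
  unfold prEq
  by_cases hh : h k = l
  · rw [if_pos hh]
    refine Finset.sum_congr rfl fun ω _ => ?_
    congr 1
    simp only [Prod.mk.injEq, eq_iff_iff]
    constructor
    · rintro ⟨h1, _⟩; exact h1
    · rintro h1; rw [h1]; exact ⟨rfl, hh⟩
  · rw [if_neg hh]
    refine Finset.sum_eq_zero fun ω _ => ?_
    rw [if_neg]
    rintro h2
    rw [Prod.mk.injEq] at h2
    exact hh (h2.1 ▸ h2.2)

lemma condMutInf_comp₂ {α β γ δ : Type} [Fintype α] [Fintype β] [Fintype γ] [Fintype δ]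
    (μ : FinProb Ω) {g : β → δ} (hg : Function.Injective g)
    (A : Ω → α) (B : Ω → β) (C : Ω → γ) :
    condMutInf μ A (fun ω => g (B ω)) C = condMutInf μ A B C := by
  rw [condMutInf_comm, condMutInf_comp₁ μ hg B A C, condMutInf_comm]

lemma mutInf_le_gkInf {α γ c : Type} [Fintype α] [Fintype γ] [Fintype c]
    (μ : FinProb Ω) (X1 : Ω → α) (X3 : Ω → γ) (W : Ω → c)
    (h1 : condMutInf μ W X3 X1 = 0) (h2 : condMutInf μ W X1 X3 = 0) :
    mutInf μ X1 W ≤ gkInf μ X1 X3 := by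
  have f1 := indepFact_of_condMutInf_eq_zero μ W X3 X1 h1
  have f2 := indepFact_of_condMutInf_eq_zero μ W X1 X3 h2
  set r : (α ⊕ γ) → (α ⊕ γ) → Prop := fun u v =>
    ∃ ω, 0 < μ.p ω ∧ u = Sum.inl (X1 ω) ∧ v = Sum.inr (X3 ω) with hrdef
  set s : Setoid (α ⊕ γ) := Relation.EqvGen.setoid r with hsdef
  letI instQ : Fintype (Quotient s) := Fintype.ofFinite _
  set mfn : α ⊕ γ → ℝ :=
    Sum.elim (fun x => prEq μ X1 x) (fun x => prEq μ X3 x) with hmfn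
  set ρfn : (α ⊕ γ) → c → ℝ :=
    Sum.elim (fun x w => prEq μ (fun ω => (X1 ω, W ω)) (x, w))
      (fun x w => prEq μ (fun ω => (X3 ω, W ω)) (x, w)) with hρfn
  -- the cross-ratio invariance along the equivalence
  have key : ∀ u v : α ⊕ γ, Relation.EqvGen r u v → u = v ∨
      (0 < mfn u ∧ 0 < mfn v ∧ ∀ w : c, ρfn u w * mfn v = mfn u * ρfn v w) := by
    intro u v h
    induction h with
    | rel u v huv =>
      obtain ⟨ω, hpω, hu, hv⟩ := huv
      subst hu; subst hv
      right
      have hj : 0 < prEq μ (fun ω' => (X1 ω', X3 ω')) (X1 ω, X3 ω) :=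
        lt_of_lt_of_le hpω (prEq_self_le μ (fun ω' => (X1 ω', X3 ω')) ω)
      have m1pos : 0 < prEq μ X1 (X1 ω) :=
        lt_of_lt_of_le hj (prEq_le_comp μ Prod.fst (fun ω' => (X1 ω', X3 ω')) (X1 ω, X3 ω))
      have m3pos : 0 < prEq μ X3 (X3 ω) :=
        lt_of_lt_of_le hj (prEq_le_comp μ Prod.snd (fun ω' => (X1 ω', X3 ω')) (X1 ω, X3 ω))
      refine ⟨by simpa [hmfn] using m1pos, by simpa [hmfn] using m3pos, fun w => ?_⟩
      simp only [hmfn, hρfn, Sum.elim_inl, Sum.elim_inr]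
      have e1 := f1 (w, X3 ω, X1 ω)
      have e2 := f2 (w, X1 ω, X3 ω)
      have ha : prEq μ (fun ω' => (W ω', X3 ω', X1 ω')) (w, X3 ω, X1 ω)
          = prEq μ (fun ω' => (W ω', X1 ω', X3 ω')) (w, X1 ω, X3 ω) :=
        prEq_comp μ (show Function.Injective (fun y : c × α × γ => (y.1, y.2.2, y.2.1)) by
          rintro ⟨a, b, d⟩ ⟨a', b', d'⟩ hxy; simp_all [Prod.ext_iff])
          (fun ω' => (W ω', X1 ω', X3 ω')) (w, X1 ω, X3 ω)
      have hb : prEq μ (fun ω' => (W ω', X1 ω')) (w, X1 ω)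
          = prEq μ (fun ω' => (X1 ω', W ω')) (X1 ω, w) :=
        prEq_comp μ Prod.swap_injective (fun ω' => (X1 ω', W ω')) (X1 ω, w)
      have hc : prEq μ (fun ω' => (X3 ω', X1 ω')) (X3 ω, X1 ω)
          = prEq μ (fun ω' => (X1 ω', X3 ω')) (X1 ω, X3 ω) :=
        prEq_comp μ Prod.swap_injective (fun ω' => (X1 ω', X3 ω')) (X1 ω, X3 ω)
      have hd : prEq μ (fun ω' => (W ω', X3 ω')) (w, X3 ω)
          = prEq μ (fun ω' => (X3 ω', W ω')) (X3 ω, w) :=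
        prEq_comp μ Prod.swap_injective (fun ω' => (X3 ω', W ω')) (X3 ω, w)
      rw [ha, hb, hc] at e1
      rw [hd] at e2
      apply mul_right_cancel₀ hj.ne'
      calc prEq μ (fun ω' => (X1 ω', W ω')) (X1 ω, w) * prEq μ X3 (X3 ω)
            * prEq μ (fun ω' => (X1 ω', X3 ω')) (X1 ω, X3 ω)
          = (prEq μ (fun ω' => (X1 ω', W ω')) (X1 ω, w)
              * prEq μ (fun ω' => (X1 ω', X3 ω')) (X1 ω, X3 ω)) * prEq μ X3 (X3 ω) := by ring
        _ = (prEq μ (fun ω' => (W ω', X1 ω', X3 ω')) (w, X1 ω, X3 ω) * prEq μ X1 (X1 ω))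
              * prEq μ X3 (X3 ω) := by rw [e1]
        _ = (prEq μ (fun ω' => (W ω', X1 ω', X3 ω')) (w, X1 ω, X3 ω) * prEq μ X3 (X3 ω))
              * prEq μ X1 (X1 ω) := by ring
        _ = (prEq μ (fun ω' => (X3 ω', W ω')) (X3 ω, w)
              * prEq μ (fun ω' => (X1 ω', X3 ω')) (X1 ω, X3 ω)) * prEq μ X1 (X1 ω) := by
            rw [e2]
        _ = prEq μ X1 (X1 ω) * prEq μ (fun ω' => (X3 ω', W ω')) (X3 ω, w)
              * prEq μ (fun ω' => (X1 ω', X3 ω')) (X1 ω, X3 ω) := by ring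
    | refl u => exact Or.inl rfl
    | symm u v h ih =>
      rcases ih with heq | ⟨hpu, hpv, hcr⟩
      · exact Or.inl heq.symm
      · exact Or.inr ⟨hpv, hpu, fun w => by linear_combination -(hcr w)⟩
    | trans u v z h1' h2' ih1 ih2 =>
      rcases ih1 with heq | ⟨hpu, hpv, hcr⟩
      · rw [heq]; exact ih2
      · rcases ih2 with heq2 | ⟨hpv2, hpz, hcr2⟩
        · rw [← heq2]; exact Or.inr ⟨hpu, hpv, hcr⟩
        · refine Or.inr ⟨hpu, hpz, fun w => ?_⟩
          apply mul_right_cancel₀ hpv.ne'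
          linear_combination mfn z * (hcr w) + mfn u * (hcr2 w)
  have CC : ∀ x1 x1' : α, Quotient.mk s (Sum.inl x1) = Quotient.mk s (Sum.inl x1') →
      ∀ w : c, prEq μ (fun ω => (X1 ω, W ω)) (x1, w) * prEq μ X1 x1'
        = prEq μ X1 x1 * prEq μ (fun ω => (X1 ω, W ω)) (x1', w) := by
    intro x1 x1' hq w
    have hEq : Relation.EqvGen r (Sum.inl x1) (Sum.inl x1') := Quotient.exact hq
    rcases key _ _ hEq with heq | ⟨_, _, hcr⟩
    · injection heq with heq'
      rw [heq']
      ring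
    · have := hcr w
      simpa [hmfn, hρfn] using this
  -- the factorization I(X1 ; W | Qv) = 0
  have hfact : IndepFact μ X1 W (fun ω => Quotient.mk s (Sum.inl (X1 ω))) := by
    rintro ⟨x1, w, q⟩
    show prEq μ (fun ω => (X1 ω, W ω, Quotient.mk s (Sum.inl (X1 ω)))) (x1, w, q)
        * prEq μ (fun ω => Quotient.mk s (Sum.inl (X1 ω))) q
      = prEq μ (fun ω => (X1 ω, Quotient.mk s (Sum.inl (X1 ω)))) (x1, q)
        * prEq μ (fun ω => (W ω, Quotient.mk s (Sum.inl (X1 ω)))) (w, q)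
    have hA : prEq μ (fun ω => (X1 ω, W ω, Quotient.mk s (Sum.inl (X1 ω)))) (x1, w, q)
        = @ite ℝ (Quotient.mk s (Sum.inl x1) = q) (Classical.propDecidable _)
          (prEq μ (fun ω => (X1 ω, W ω)) (x1, w)) 0 := by
      have hre : prEq μ (fun ω => ((X1 ω, W ω), Quotient.mk s (Sum.inl (X1 ω)))) ((x1, w), q)
          = prEq μ (fun ω => (X1 ω, W ω, Quotient.mk s (Sum.inl (X1 ω)))) (x1, w, q) :=
        prEq_comp μ (show Function.Injective
            (fun y : α × c × Quotient s => ((y.1, y.2.1), y.2.2)) by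
          rintro ⟨a, b, d⟩ ⟨a', b', d'⟩ hxy; simp_all [Prod.ext_iff])
          (fun ω => (X1 ω, W ω, Quotient.mk s (Sum.inl (X1 ω)))) (x1, w, q)
      rw [← hre]
      exact prEq_pair_det μ (fun ω => (X1 ω, W ω))
        (fun y : α × c => Quotient.mk s (Sum.inl y.1)) (x1, w) q
    have hB : prEq μ (fun ω => (X1 ω, Quotient.mk s (Sum.inl (X1 ω)))) (x1, q)
        = @ite ℝ (Quotient.mk s (Sum.inl x1) = q) (Classical.propDecidable _)
          (prEq μ X1 x1) 0 :=
      prEq_pair_det μ X1 (fun a => Quotient.mk s (Sum.inl a)) x1 q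
    have hQ : prEq μ (fun ω => Quotient.mk s (Sum.inl (X1 ω))) q = ∑ x1' : α,
        @ite ℝ (Quotient.mk s (Sum.inl x1') = q) (Classical.propDecidable _)
          (prEq μ X1 x1') 0 :=
      prEq_comp_eq_sum μ (fun a => Quotient.mk s (Sum.inl a)) X1 q
    have hW : prEq μ (fun ω => (W ω, Quotient.mk s (Sum.inl (X1 ω)))) (w, q) = ∑ x1' : α,
        @ite ℝ (Quotient.mk s (Sum.inl x1') = q) (Classical.propDecidable _)
          (prEq μ (fun ω => (X1 ω, W ω)) (x1', w)) 0 := by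
      have h0 : prEq μ (fun ω => (W ω, Quotient.mk s (Sum.inl (X1 ω)))) (w, q) = ∑ y : α × c,
          @ite ℝ ((y.2, Quotient.mk s (Sum.inl y.1)) = (w, q)) (Classical.propDecidable _)
            (prEq μ (fun ω => (X1 ω, W ω)) y) 0 :=
        prEq_comp_eq_sum μ (fun y : α × c => (y.2, Quotient.mk s (Sum.inl y.1)))
          (fun ω => (X1 ω, W ω)) (w, q)
      rw [h0, Fintype.sum_prod_type]
      refine Finset.sum_congr rfl fun x1' _ => ?_
      by_cases hq' : Quotient.mk s (Sum.inl x1') = q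
      · rw [if_pos hq']
        have hterm : ∀ w' : c, (@ite ℝ (((w' : c), Quotient.mk s (Sum.inl x1')) = (w, q))
              (Classical.propDecidable _) (prEq μ (fun ω => (X1 ω, W ω)) (x1', w')) 0)
            = @ite ℝ (w' = w) (Classical.propDecidable _)
              (prEq μ (fun ω => (X1 ω, W ω)) (x1', w')) 0 := by
          intro w'
          congr 1
          simp [Prod.mk.injEq, hq']
        rw [Finset.sum_congr rfl fun w' _ => hterm w']
        rw [Finset.sum_ite_eq' Finset.univ w (fun w' => prEq μ (fun ω => (X1 ω, W ω)) (x1', w'))]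
        simp
      · rw [if_neg hq']
        refine Finset.sum_eq_zero fun w' _ => ?_
        rw [if_neg]
        rw [Prod.mk.injEq]
        rintro ⟨_, hh⟩
        exact hq' hh
    rw [hA, hB, hQ, hW]
    by_cases hc : Quotient.mk s (Sum.inl x1) = q
    · rw [if_pos hc, if_pos hc, Finset.mul_sum, Finset.mul_sum]
      refine Finset.sum_congr rfl fun x1' _ => ?_
      by_cases hq' : Quotient.mk s (Sum.inl x1') = q
      · rw [if_pos hq', if_pos hq']
        exact CC x1 x1' (hc.trans hq'.symm) w
      · rw [if_neg hq', if_neg hq', mul_zero, mul_zero]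
    · rw [if_neg hc, if_neg hc, zero_mul, zero_mul]
  have hI0 : condMutInf μ X1 W (fun ω => Quotient.mk s (Sum.inl (X1 ω))) = 0 :=
    condMutInf_eq_zero_of_indepFact μ X1 W _ hfact
  -- chain:  I(X1;W) = I(Qv;W) + I(X1;W|Qv) ≤ H(Qv)
  have hcr := chainRule μ X1 (fun ω => Quotient.mk s (Sum.inl (X1 ω))) W (fun _ : Ω => ())
  have hx1q : condMutInf μ (fun ω => (X1 ω, Quotient.mk s (Sum.inl (X1 ω)))) W (fun _ : Ω => ())
      = condMutInf μ X1 W (fun _ : Ω => ()) :=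
    condMutInf_comp₁ μ (g := fun a : α => ((a : α), Quotient.mk s (Sum.inl a)))
      (fun x y hxy => congrArg Prod.fst hxy) X1 W (fun _ : Ω => ())
  have hq0 : condMutInf μ X1 W
      (fun ω => (Quotient.mk s (Sum.inl (X1 ω)), ())) = 0 := by
    rw [condMutInf_comp₃ μ (g := fun q : Quotient s => ((q : Quotient s), ()))
      (fun x y hxy => congrArg Prod.fst hxy) X1 W (fun ω => Quotient.mk s (Sum.inl (X1 ω)))]
    exact hI0
  have hle2 : condMutInf μ (fun ω => Quotient.mk s (Sum.inl (X1 ω))) W (fun _ : Ω => ())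
      ≤ condEnt μ (fun ω => Quotient.mk s (Sum.inl (X1 ω))) (fun _ : Ω => ()) :=
    condMutInf_le_condEnt μ _ W _
  have hEnt : condEnt μ (fun ω => Quotient.mk s (Sum.inl (X1 ω))) (fun _ : Ω => ())
      = ent μ (fun ω => Quotient.mk s (Sum.inl (X1 ω))) := by
    simp only [condEnt]
    have r1 : ent μ (fun ω => (Quotient.mk s (Sum.inl (X1 ω)), ()))
        = ent μ (fun ω => Quotient.mk s (Sum.inl (X1 ω))) :=
      ent_comp μ (show Function.Injective (fun a : Quotient s => ((a : Quotient s), ())) from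
        fun x y hxy => congrArg Prod.fst hxy) (fun ω => Quotient.mk s (Sum.inl (X1 ω)))
    rw [r1, ent_unit]
    ring
  have hmle : mutInf μ X1 W ≤ ent μ (fun ω => Quotient.mk s (Sum.inl (X1 ω))) := by
    rw [mutInf_eq_condMutInf_unit]
    rw [← hx1q, hcr, hq0]
    linarith
  -- membership in the GK set
  set n : ℕ := Fintype.card (Quotient s) with hn
  set e : Quotient s ≃ Fin n := Fintype.equivFin (Quotient s) with he
  have hee : ent μ (fun ω => e (Quotient.mk s (Sum.inl (X1 ω))))
      = ent μ (fun ω => Quotient.mk s (Sum.inl (X1 ω))) :=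
    ent_comp μ e.injective (fun ω => Quotient.mk s (Sum.inl (X1 ω)))
  have hbdd : BddAbove { h : ℝ | ∃ (n' : ℕ) (f : α → Fin n') (g : γ → Fin n'),
      (∀ ω, 0 < μ.p ω → f (X1 ω) = g (X3 ω)) ∧ h = ent μ (fun ω => f (X1 ω)) } := by
    refine ⟨(Fintype.card α : ℝ), fun h hh => ?_⟩
    obtain ⟨n', f', g', _, hh⟩ := hh
    rw [hh]
    exact ent_comp_le_card μ f' X1
  have hgk : ent μ (fun ω => e (Quotient.mk s (Sum.inl (X1 ω)))) ≤ gkInf μ X1 X3 := by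
    unfold gkInf
    apply le_csSup hbdd
    refine ⟨n, fun a => e (Quotient.mk s (Sum.inl a)), fun b => e (Quotient.mk s (Sum.inr b)),
      fun ω hω => ?_, rfl⟩
    exact congrArg e (Quotient.sound (Relation.EqvGen.rel _ _ ⟨ω, hω, rfl, rfl⟩))
  linarith [hmle, hgk, hee]

end AuxGK

/-- In any 3SS scheme (here expressed through the information-theoretic
correctness and privacy conditions that hold for every secret distribution
supported on the domain), the shares satisfy `I(W₁₂;W₂₃|W₃₁) ≥ RI(X₁;X₃)`. -/
theorem shares_cmi_ge_resInf {𝒳₁ 𝒳₂ 𝒳₃ A B C : Type}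
    [Fintype 𝒳₁] [Fintype 𝒳₂] [Fintype 𝒳₃] [Fintype A] [Fintype B] [Fintype C]
    (μ : FinProb Ω)
    (X1 : Ω → 𝒳₁) (X2 : Ω → 𝒳₂) (X3 : Ω → 𝒳₃)
    (W12 : Ω → A) (W23 : Ω → B) (W31 : Ω → C)
    (hC1 : condEnt μ X1 (fun ω => (W12 ω, W31 ω)) = 0)
    (hC2 : condEnt μ X2 (fun ω => (W23 ω, W12 ω)) = 0)
    (hC3 : condEnt μ X3 (fun ω => (W31 ω, W23 ω)) = 0)
    (hP1 : condMutInf μ (fun ω => (W12 ω, W31 ω)) (fun ω => (X2 ω, X3 ω)) X1 = 0)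
    (hP2 : condMutInf μ (fun ω => (W23 ω, W12 ω)) (fun ω => (X1 ω, X3 ω)) X2 = 0)
    (hP3 : condMutInf μ (fun ω => (W31 ω, W23 ω)) (fun ω => (X1 ω, X2 ω)) X3 = 0) :
    condMutInf μ W12 W23 W31 ≥ resInf μ X1 X3 := by
  classical
  -- privacy consequences
  have hP1' : condMutInf μ W31 X3 X1 = 0 := by
    have hle := le_condMutInf_pair μ W12 W31 X2 X3 X1
    have h0 := condMutInf_nonneg μ W31 X3 X1
    rw [hP1] at hle
    linarith
  have hP3' : condMutInf μ W31 X1 X3 = 0 := by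
    have hle := le_condMutInf_pair μ W23 W31 X2 X1 X3
    have e1 : condMutInf μ (fun ω => (W23 ω, W31 ω)) (fun ω => (X2 ω, X1 ω)) X3
        = condMutInf μ (fun ω => (W31 ω, W23 ω)) (fun ω => (X2 ω, X1 ω)) X3 :=
      condMutInf_comp₁ μ Prod.swap_injective (fun ω => (W31 ω, W23 ω))
        (fun ω => (X2 ω, X1 ω)) X3
    have e2 : condMutInf μ (fun ω => (W31 ω, W23 ω)) (fun ω => (X2 ω, X1 ω)) X3
        = condMutInf μ (fun ω => (W31 ω, W23 ω)) (fun ω => (X1 ω, X2 ω)) X3 :=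
      condMutInf_comp₂ μ Prod.swap_injective (fun ω => (W31 ω, W23 ω))
        (fun ω => (X1 ω, X2 ω)) X3
    have h0 := condMutInf_nonneg μ W31 X1 X3
    rw [e1, e2, hP3] at hle
    linarith
  -- correctness consequences
  have hcorr1 : condMutInf μ X1 (fun ω => (W23 ω, X3 ω)) (fun ω => (W12 ω, W31 ω)) = 0 := by
    have hle := condMutInf_le_condEnt μ X1 (fun ω => (W23 ω, X3 ω)) (fun ω => (W12 ω, W31 ω))
    have h0 := condMutInf_nonneg μ X1 (fun ω => (W23 ω, X3 ω)) (fun ω => (W12 ω, W31 ω))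
    rw [hC1] at hle
    linarith
  have hcorr3 : condMutInf μ X3 W12 (fun ω => (W23 ω, W31 ω)) = 0 := by
    have hle := condMutInf_le_condEnt μ X3 W12 (fun ω => (W23 ω, W31 ω))
    have heq : condEnt μ X3 (fun ω => (W23 ω, W31 ω)) = condEnt μ X3 (fun ω => (W31 ω, W23 ω)) :=
      condEnt_comp₂ μ Prod.swap_injective X3 (fun ω => (W31 ω, W23 ω))
    have h0 := condMutInf_nonneg μ X3 W12 (fun ω => (W23 ω, W31 ω))
    rw [heq, hC3] at hle
    linarith
  -- Step 1 : I(W12;W23|W31) ≥ I(X1;X3|W31)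
  have hE1 : condMutInf μ (fun ω => (W12 ω, X1 ω)) (fun ω => (W23 ω, X3 ω)) W31
      = condMutInf μ W12 W23 W31 := by
    have hswap : condMutInf μ (fun ω => (W12 ω, X1 ω)) (fun ω => (W23 ω, X3 ω)) W31
        = condMutInf μ (fun ω => (X1 ω, W12 ω)) (fun ω => (W23 ω, X3 ω)) W31 :=
      condMutInf_comp₁ μ Prod.swap_injective (fun ω => (X1 ω, W12 ω))
        (fun ω => (W23 ω, X3 ω)) W31
    have hcr := chainRule μ X1 W12 (fun ω => (W23 ω, X3 ω)) W31
    have hcr2 : condMutInf μ W12 (fun ω => (W23 ω, X3 ω)) W31 = condMutInf μ W12 W23 W31 := by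
      have hcm := condMutInf_comm μ W12 (fun ω => (W23 ω, X3 ω)) W31
      have hswap2 : condMutInf μ (fun ω => (W23 ω, X3 ω)) W12 W31
          = condMutInf μ (fun ω => (X3 ω, W23 ω)) W12 W31 :=
        condMutInf_comp₁ μ Prod.swap_injective (fun ω => (X3 ω, W23 ω)) W12 W31
      have hcr3 := chainRule μ X3 W23 W12 W31
      rw [hcorr3] at hcr3
      have hcm2 := condMutInf_comm μ W23 W12 W31
      linarith
    rw [hswap, hcr, hcorr1, hcr2]
    ring
  have hE3 : condMutInf μ X1 X3 W31
      ≤ condMutInf μ (fun ω => (W12 ω, X1 ω)) (fun ω => (W23 ω, X3 ω)) W31 :=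
    le_condMutInf_pair μ W12 X1 W23 X3 W31
  have hstep1 : condMutInf μ X1 X3 W31 ≤ condMutInf μ W12 W23 W31 := by
    rw [← hE1]; exact hE3
  -- Step 2 : I(X1;X3|W31) = I(X1;X3) - I(X1;W31)
  have hstep2 : condMutInf μ X1 X3 W31 = mutInf μ X1 X3 - mutInf μ X1 W31 := by
    have hcrA := chainRule μ W31 X3 X1 (fun _ : Ω => ())
    have hcrB := chainRule μ X3 W31 X1 (fun _ : Ω => ())
    have hsw : condMutInf μ (fun ω => (W31 ω, X3 ω)) X1 (fun _ : Ω => ())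
        = condMutInf μ (fun ω => (X3 ω, W31 ω)) X1 (fun _ : Ω => ()) :=
      condMutInf_comp₁ μ Prod.swap_injective (fun ω => (X3 ω, W31 ω)) X1 (fun _ : Ω => ())
    have hu1 : condMutInf μ W31 X1 (fun ω => (X3 ω, ())) = condMutInf μ W31 X1 X3 :=
      condMutInf_comp₃ μ (g := fun x : 𝒳₃ => ((x : 𝒳₃), ()))
        (fun x y hxy => congrArg Prod.fst hxy) W31 X1 X3
    have hu2 : condMutInf μ X3 X1 (fun ω => (W31 ω, ())) = condMutInf μ X3 X1 W31 :=
      condMutInf_comp₃ μ (g := fun x : C => ((x : C), ()))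
        (fun x y hxy => congrArg Prod.fst hxy) X3 X1 W31
    rw [hu1, hP3'] at hcrA
    rw [hu2] at hcrB
    have hcm1 := condMutInf_comm μ X1 X3 (fun _ : Ω => ())
    have hcm2 := condMutInf_comm μ X1 W31 (fun _ : Ω => ())
    have hcm3 := condMutInf_comm μ X1 X3 W31
    have hm1 := mutInf_eq_condMutInf_unit μ X1 X3
    have hm2 := mutInf_eq_condMutInf_unit μ X1 W31
    linarith
  -- Step 3 : I(X1;W31) ≤ CI_GK(X1;X3)
  have hstep3 : mutInf μ X1 W31 ≤ gkInf μ X1 X3 :=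
    mutInf_le_gkInf μ X1 X3 W31 hP1' hP3'
  -- putting it together
  have hres : resInf μ X1 X3 = mutInf μ X1 X3 - gkInf μ X1 X3 := rfl
  rw [ge_iff_le, hres]
  linarith
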